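/- For a detailed balanced Markov process, −q_n ∂C/∂p_n = ∑_{m ∈ N} [∑_{e : m → n} r_e p_m − ∑_{e : n → m} r_e p_n], where C is the extended dissipation functional C(p) = (1/4) ∑_{e ∈ E} r_e q_{s(e)} (p_{s(e)}/q_{s(e)} − p_{t(e)}/q_{t(e)})². -/

import Mathlib

open Finset

-- fiberwise collection lemmas
lemma fiber1 {N E : Type} [Fintype N] [Fintype E] [DecidableEq N]
    (s t : E → N) (n : N) (F : E → ℝ) :
    ∑ m, ∑ e ∈ univ.filter (fun e => s e = m ∧ t e = n), F e
      = ∑ e ∈ univ.filter (fun e => t e = n), F e := by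
  rw [← Finset.sum_fiberwise (univ.filter (fun e => t e = n)) s F]
  refine Finset.sum_congr rfl fun m _ => Finset.sum_congr ?_ fun _ _ => rfl
  ext e
  simp [and_comm]

lemma fiber2 {N E : Type} [Fintype N] [Fintype E] [DecidableEq N]
    (s t : E → N) (n : N) (F : E → ℝ) :
    ∑ m, ∑ e ∈ univ.filter (fun e => s e = n ∧ t e = m), F e
      = ∑ e ∈ univ.filter (fun e => s e = n), F e := by
  rw [← Finset.sum_fiberwise (univ.filter (fun e => s e = n)) t F]
  refine Finset.sum_congr rfl fun m _ => Finset.sum_congr ?_ fun _ _ => rfl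
  ext e
  simp [and_comm]

theorem neg_q_partial_dissipation
    {N E : Type} [Fintype N] [Fintype E] [DecidableEq N]
    (s t : E → N) (r : E → ℝ) (hr : ∀ e, 0 < r e)
    (q : N → ℝ) (hq : ∀ i, 0 < q i)
    (h_db : ∀ i j : N,
      ∑ e ∈ univ.filter (fun e => s e = i ∧ t e = j), r e * q i
        = ∑ e ∈ univ.filter (fun e => s e = j ∧ t e = i), r e * q j)
    (C : (N → ℝ) → ℝ)
    (hC : ∀ p : N → ℝ,
      C p = (1/4) * ∑ e, r e * q (s e) * (p (s e) / q (s e) - p (t e) / q (t e))^2)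
    (p : N → ℝ) (n : N) :
    -(q n * fderiv ℝ C p (Pi.single n 1)) =
      ∑ m, ((∑ e ∈ univ.filter (fun e => s e = m ∧ t e = n), r e * p m)
            - ∑ e ∈ univ.filter (fun e => s e = n ∧ t e = m), r e * p n) := by
  classical
  have hqne : ∀ i, q i ≠ 0 := fun i => (hq i).ne'
  -- the linear functional that is the derivative of each inner affine map
  set g : E → ((N → ℝ) →L[ℝ] ℝ) := fun e =>
    (q (s e))⁻¹ • ContinuousLinearMap.proj (s e)
      - (q (t e))⁻¹ • ContinuousLinearMap.proj (t e) with hg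
  have h1 : ∀ e, HasFDerivAt
      (fun p' : N → ℝ => p' (s e) / q (s e) - p' (t e) / q (t e)) (g e) p := by
    intro e
    have : (fun p' : N → ℝ => p' (s e) / q (s e) - p' (t e) / q (t e)) = g e := by
      ext p'
      simp [hg, div_eq_inv_mul]
    rw [this]
    exact (g e).hasFDerivAt
  set D : E → ℝ := fun e => p (s e) / q (s e) - p (t e) / q (t e) with hD
  have h2 : ∀ e, HasFDerivAt
      (fun p' : N → ℝ => r e * q (s e) * (p' (s e) / q (s e) - p' (t e) / q (t e))^2)
      ((r e * q (s e)) • (D e • g e + D e • g e)) p := by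
    intro e
    simpa [pow_two] using ((h1 e).mul (h1 e)).const_mul (r e * q (s e))
  have htot : HasFDerivAt C
      ((1/4 : ℝ) • ∑ e, (r e * q (s e)) • (D e • g e + D e • g e)) p := by
    have := (HasFDerivAt.sum (fun e (_ : e ∈ univ) => h2 e)).const_mul (1/4 : ℝ)
    have hCe : C = fun p' : N → ℝ =>
        (1/4) * ∑ e, r e * q (s e) * (p' (s e) / q (s e) - p' (t e) / q (t e))^2 :=
      funext hC
    rw [hCe]
    simpa using this
  rw [htot.fderiv]
  -- evaluate the derivative at Pi.single n 1
  have heval : ((1/4 : ℝ) • ∑ e, (r e * q (s e)) • (D e • g e + D e • g e))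
      (Pi.single n 1)
      = (1/4) * ∑ e, (r e * q (s e)) * (2 * D e *
          ((q (s e))⁻¹ * (if s e = n then 1 else 0)
            - (q (t e))⁻¹ * (if t e = n then 1 else 0))) := by
    simp only [ContinuousLinearMap.smul_apply, ContinuousLinearMap.coe_sum',
      Finset.sum_apply, ContinuousLinearMap.add_apply, hg,
      ContinuousLinearMap.sub_apply, ContinuousLinearMap.proj_apply,
      Pi.single_apply, smul_eq_mul]
    congr 1
    refine Finset.sum_congr rfl fun e _ => by ring
  rw [heval]
  -- split the sum into the two filtered sums
  have hsplit : ∑ e, (r e * q (s e)) * (2 * D e *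
        ((q (s e))⁻¹ * (if s e = n then 1 else 0)
          - (q (t e))⁻¹ * (if t e = n then 1 else 0)))
      = (∑ e ∈ univ.filter (fun e => s e = n),
          (r e * q (s e)) * (2 * D e) * (q (s e))⁻¹)
        - (∑ e ∈ univ.filter (fun e => t e = n),
          (r e * q (s e)) * (2 * D e) * (q (t e))⁻¹) := by
    rw [Finset.sum_filter, Finset.sum_filter, ← Finset.sum_sub_distrib]
    refine Finset.sum_congr rfl fun e _ => by
      by_cases h1 : s e = n <;> by_cases h2 : t e = n <;> simp [h1, h2] <;> ring
  rw [hsplit]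
  -- name the four key sums
  set a : ℝ := ∑ e ∈ univ.filter (fun e => s e = n), r e with ha
  set b : ℝ := ∑ e ∈ univ.filter (fun e => t e = n), r e * p (s e) with hb
  -- detailed balance consequence 1 : ∑_{t=n} r q(s) = q n * a
  have hdb1 : ∑ e ∈ univ.filter (fun e => t e = n), r e * q (s e) = q n * a := by
    have h := fiber2 s t n (fun e => r e * q n)
    have h' := fiber1 s t n (fun e => r e * q (s e))
    have hswap : ∑ m, ∑ e ∈ univ.filter (fun e => s e = n ∧ t e = m), r e * q n
        = ∑ m, ∑ e ∈ univ.filter (fun e => s e = m ∧ t e = n), r e * q (s e) := by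
      refine Finset.sum_congr rfl fun m _ => ?_
      rw [h_db n m]
      refine Finset.sum_congr rfl fun e he => ?_
      rw [(Finset.mem_filter.1 he).2.1]
    rw [← h', ← hswap, h, ha, Finset.mul_sum]
    refine Finset.sum_congr rfl fun e _ => by ring
  -- detailed balance consequence 2
  have hdb2 : ∑ e ∈ univ.filter (fun e => s e = n),
      r e * q n * (p (t e) / q (t e)) = b := by
    have key : ∀ m, ∑ e ∈ univ.filter (fun e => s e = n ∧ t e = m),
        r e * q n * (p (t e) / q (t e))
        = ∑ e ∈ univ.filter (fun e => s e = m ∧ t e = n), r e * p (s e) := by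
      intro m
      have h := h_db n m
      have h1 : ∑ e ∈ univ.filter (fun e => s e = n ∧ t e = m),
          r e * q n * (p (t e) / q (t e))
          = (∑ e ∈ univ.filter (fun e => s e = n ∧ t e = m), r e * q n)
              * (p m / q m) := by
        rw [Finset.sum_mul]
        refine Finset.sum_congr rfl fun e he => ?_
        rw [(Finset.mem_filter.1 he).2.2]
      have h2 : ∑ e ∈ univ.filter (fun e => s e = m ∧ t e = n), r e * p (s e)
          = (∑ e ∈ univ.filter (fun e => s e = m ∧ t e = n), r e * q m)
              * (p m / q m) := by
        rw [Finset.sum_mul]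
        refine Finset.sum_congr rfl fun e he => ?_
        rw [(Finset.mem_filter.1 he).2.1]
        field_simp [hqne]
      rw [h1, h2, h]
    calc ∑ e ∈ univ.filter (fun e => s e = n), r e * q n * (p (t e) / q (t e))
        = ∑ m, ∑ e ∈ univ.filter (fun e => s e = n ∧ t e = m),
            r e * q n * (p (t e) / q (t e)) :=
          (fiber2 s t n _).symm
      _ = ∑ m, ∑ e ∈ univ.filter (fun e => s e = m ∧ t e = n), r e * p (s e) :=
          Finset.sum_congr rfl fun m _ => key m
      _ = b := fiber1 s t n _
  -- rewrite the RHS of the goal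
  have hRHS : ∑ m, ((∑ e ∈ univ.filter (fun e => s e = m ∧ t e = n), r e * p m)
            - ∑ e ∈ univ.filter (fun e => s e = n ∧ t e = m), r e * p n)
      = b - a * p n := by
    rw [Finset.sum_sub_distrib]
    congr 1
    · rw [hb, ← fiber1 s t n (fun e => r e * p (s e))]
      refine Finset.sum_congr rfl fun m _ => Finset.sum_congr rfl fun e he => ?_
      rw [(Finset.mem_filter.1 he).2.1]
    · rw [fiber2 s t n (fun e => r e * p n), ha, Finset.sum_mul]
  rw [hRHS]
  -- compute the two filtered sums
  have hS1 : ∑ e ∈ univ.filter (fun e => s e = n),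
      (r e * q (s e)) * (2 * D e) * (q (s e))⁻¹
      = (2 * (a * p n) - 2 * b) * (q n)⁻¹ := by
    rw [← hdb2, ha, Finset.sum_mul, Finset.mul_sum, Finset.mul_sum,
      ← Finset.sum_sub_distrib, Finset.sum_mul]
    refine Finset.sum_congr rfl fun e he => ?_
    have hse : s e = n := by
      simpa using (Finset.mem_filter.1 he).2
    rw [hD]
    simp only [hse]
    field_simp [hqne]
  have hS2 : ∑ e ∈ univ.filter (fun e => t e = n),
      (r e * q (s e)) * (2 * D e) * (q (t e))⁻¹
      = ((2 * b - 2 * (a * p n))) * (q n)⁻¹ := by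
    have expand : ∑ e ∈ univ.filter (fun e => t e = n),
        (r e * q (s e)) * (2 * D e) * (q (t e))⁻¹
        = (2 * (∑ e ∈ univ.filter (fun e => t e = n), r e * p (s e))
            - 2 * ((∑ e ∈ univ.filter (fun e => t e = n), r e * q (s e))
                * (p n / q n))) * (q n)⁻¹ := by
      rw [Finset.mul_sum, Finset.sum_mul, Finset.mul_sum,
        ← Finset.sum_sub_distrib, Finset.sum_mul]
      refine Finset.sum_congr rfl fun e he => ?_
      have hte : t e = n := by
        simpa using (Finset.mem_filter.1 he).2
      rw [hD]
      simp only [hte]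
      field_simp [hqne]
    rw [expand, hdb1, ← hb]
    have : q n * a * (p n / q n) = a * p n := by field_simp [hqne]
    rw [this]
  rw [hS1, hS2]
  field_simp [hqne]
  ring
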